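/- arXiv:2306.17495 — 2 statements merged into one kernel-verified Lean document; each statement's English description precedes it below -/
import Mathlib

section
/- Let ν > 0, T > 0, k ∈ {1, 2, 3}, and let n, J : [0,1] × [0,T] → ℝ be smooth functions satisfying n_t − ν n_{xx} + J_x = 0 on [0,1] × [0,T] and ∂_x^j n(0,t) = ∂_x^j n(1,t) = 0 for j = 0, 1, …, k−1 and all t ∈ [0,T]. Then for all t ∈ [0,T]: ∫₀¹ (∂_x^k J)² dx = ν² ∫₀¹ (∂_x^{k+1} n)² dx + ∫₀¹ (∂_x^{k−1} n_t)² dx + ν (d/dt) ∫₀¹ (∂_x^k n)² dx. -/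
open Set

noncomputable section

/-- Time derivative of a function of time and space. -/
def tderiv (f : ℝ → ℝ → ℝ) (t x : ℝ) : ℝ := deriv (fun s => f s x) t

variable {F' : Type*} [NormedAddCommGroup F'] [NormedSpace ℝ F']

lemma slice_hasDerivAt_fst (f : ℝ × ℝ → F') {p : ℝ × ℝ} (hf : DifferentiableAt ℝ f p) :
    HasDerivAt (fun s => f (s, p.2)) (fderiv ℝ f p ((1:ℝ), (0:ℝ))) p.1 := by
  have h1 : HasDerivAt (fun s : ℝ => (s, p.2)) ((1:ℝ), (0:ℝ)) p.1 :=
    (hasDerivAt_id p.1).prodMk (hasDerivAt_const p.1 p.2)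
  have := (hf.hasFDerivAt.comp_hasDerivAt p.1 (by simpa using h1))
  simpa [Function.comp_def] using this

lemma slice_hasDerivAt_snd (f : ℝ × ℝ → F') {p : ℝ × ℝ} (hf : DifferentiableAt ℝ f p) :
    HasDerivAt (fun y => f (p.1, y)) (fderiv ℝ f p ((0:ℝ), (1:ℝ))) p.2 := by
  have h1 : HasDerivAt (fun y : ℝ => (p.1, y)) ((0:ℝ), (1:ℝ)) p.2 :=
    (hasDerivAt_const p.2 p.1).prodMk (hasDerivAt_id p.2)
  have := (hf.hasFDerivAt.comp_hasDerivAt p.2 (by simpa using h1))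
  simpa [Function.comp_def] using this

lemma contDiff_fderiv_apply' (f : ℝ × ℝ → ℝ) (hf : ContDiff ℝ (⊤ : ℕ∞) f) (v : ℝ × ℝ) :
    ContDiff ℝ (⊤ : ℕ∞) (fun p => fderiv ℝ f p v) :=
  (hf.fderiv_right (le_of_eq (by rfl))).clm_apply contDiff_const

lemma joint_smooth_iteratedDeriv (n : ℝ → ℝ → ℝ)
    (hn : ContDiff ℝ (⊤ : ℕ∞) fun p : ℝ × ℝ => n p.1 p.2) (j : ℕ) :
    ContDiff ℝ (⊤ : ℕ∞) fun p : ℝ × ℝ => iteratedDeriv j (n p.1) p.2 := by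
  induction j with
  | zero => simpa [iteratedDeriv_zero] using hn
  | succ j ih =>
    have key : ContDiff ℝ (⊤ : ℕ∞)
        fun p : ℝ × ℝ => fderiv ℝ (fun q : ℝ × ℝ => iteratedDeriv j (n q.1) q.2) p ((0:ℝ),(1:ℝ)) :=
      contDiff_fderiv_apply' _ ih _
    have : ∀ p : ℝ × ℝ, iteratedDeriv (j+1) (n p.1) p.2
        = fderiv ℝ (fun q : ℝ × ℝ => iteratedDeriv j (n q.1) q.2) p ((0:ℝ),(1:ℝ)) := by
      intro p
    
      have hs := slice_hasDerivAt_snd (fun q : ℝ × ℝ => iteratedDeriv j (n q.1) q.2)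
        (ih.differentiable (by simp) p)
      rw [iteratedDeriv_succ]
      simpa using hs.deriv
    have h2 : (fun p : ℝ × ℝ => iteratedDeriv (j+1) (n p.1) p.2)
        = fun p : ℝ × ℝ => fderiv ℝ (fun q : ℝ × ℝ => iteratedDeriv j (n q.1) q.2) p ((0:ℝ),(1:ℝ)) :=
      funext this
    rw [h2]; exact key

lemma deriv_swap_general (G : ℝ × ℝ → ℝ) (hG : ContDiff ℝ (⊤ : ℕ∞) G) (t x : ℝ) :
    deriv (fun s => deriv (fun y => G (s, y)) x) t
      = deriv (fun y => deriv (fun s => G (s, y)) t) x := by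
  have hdiff : Differentiable ℝ G := hG.differentiable (by simp)
  have hΦ' : ContDiff ℝ (⊤ : ℕ∞) (fderiv ℝ G) := hG.fderiv_right (le_of_eq rfl)
  have hΦ : Differentiable ℝ (fderiv ℝ G) := hΦ'.differentiable (by simp)
  -- inner derivatives as fderiv applications
  have hin : ∀ s y : ℝ, deriv (fun y => G (s, y)) x = fderiv ℝ G (s, x) ((0:ℝ),(1:ℝ)) := by
    intro s y
    exact (slice_hasDerivAt_snd G (hdiff (s, x))).deriv
  have hin2 : ∀ y : ℝ, deriv (fun s => G (s, y)) t = fderiv ℝ G (t, y) ((1:ℝ),(0:ℝ)) := by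
    intro y
    exact (slice_hasDerivAt_fst G (hdiff (t, y))).deriv
  have hL : deriv (fun s => deriv (fun y => G (s, y)) x) t
      = fderiv ℝ (fderiv ℝ G) (t, x) ((1:ℝ),(0:ℝ)) ((0:ℝ),(1:ℝ)) := by
    have e1 : (fun s => deriv (fun y => G (s, y)) x)
        = fun s => fderiv ℝ G (s, x) ((0:ℝ),(1:ℝ)) := funext fun s => hin s x
    rw [e1]
    have h2 : HasDerivAt (fun s : ℝ => fderiv ℝ G (s, x))
        (fderiv ℝ (fderiv ℝ G) (t, x) ((1:ℝ),(0:ℝ))) t :=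
      slice_hasDerivAt_fst (fderiv ℝ G) (hΦ (t, x))
    have h3 := h2.clm_apply (hasDerivAt_const t ((0:ℝ),(1:ℝ)))
    simpa using h3.deriv
  have hR : deriv (fun y => deriv (fun s => G (s, y)) t) x
      = fderiv ℝ (fderiv ℝ G) (t, x) ((0:ℝ),(1:ℝ)) ((1:ℝ),(0:ℝ)) := by
    have e1 : (fun y => deriv (fun s => G (s, y)) t)
        = fun y => fderiv ℝ G (t, y) ((1:ℝ),(0:ℝ)) := funext fun y => hin2 y
    rw [e1]
    have h2 : HasDerivAt (fun y : ℝ => fderiv ℝ G (t, y))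
        (fderiv ℝ (fderiv ℝ G) (t, x) ((0:ℝ),(1:ℝ))) x :=
      slice_hasDerivAt_snd (fderiv ℝ G) (hΦ (t, x))
    have h3 := h2.clm_apply (hasDerivAt_const x ((1:ℝ),(0:ℝ)))
    simpa using h3.deriv
  rw [hL, hR]
  exact second_derivative_symmetric (fun y => (hdiff y).hasFDerivAt)
    (hΦ (t, x)).hasFDerivAt _ _

lemma iteratedDeriv_tderiv_comm (n : ℝ → ℝ → ℝ)
    (hn : ContDiff ℝ (⊤ : ℕ∞) fun p : ℝ × ℝ => n p.1 p.2) (j : ℕ) (t x : ℝ) :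
    deriv (fun s => iteratedDeriv j (n s) x) t
      = iteratedDeriv j (fun y => deriv (fun s => n s y) t) x := by
  induction j generalizing x with
  | zero => simp
  | succ j ih =>
    have hGj := joint_smooth_iteratedDeriv n hn j
    have swap := deriv_swap_general (fun p : ℝ × ℝ => iteratedDeriv j (n p.1) p.2) hGj t x
    have e1 : (fun s => iteratedDeriv (j+1) (n s) x)
        = fun s => deriv (fun y => iteratedDeriv j (n s) y) x := by
      funext s; rw [iteratedDeriv_succ]
    rw [e1]
    rw [show (fun s => deriv (fun y => iteratedDeriv j (n s) y) x)
        = (fun s => deriv (fun y => (fun p : ℝ × ℝ => iteratedDeriv j (n p.1) p.2) (s, y)) x)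
        from rfl]
    rw [swap, iteratedDeriv_succ]
    congr 1
    funext y
    exact ih y

lemma contDiff_top_iteratedDeriv (f : ℝ → ℝ) (hf : ContDiff ℝ (⊤ : ℕ∞) f) (j : ℕ) :
    ContDiff ℝ (⊤ : ℕ∞) (iteratedDeriv j f) := by
  have h1 : ContDiff ℝ (⊤ : ℕ∞) fun p : ℝ × ℝ => (fun _ y => f y) p.1 p.2 :=
    hf.comp contDiff_snd
  have h2 := (joint_smooth_iteratedDeriv (fun _ y => f y) h1 j).comp
    ((contDiff_const (c := (0:ℝ))).prodMk contDiff_id)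
  simpa [Function.comp_def] using h2


/-- identity (3.22): for `k = 1, 2, 3`,
`∫ (∂_x^k J)² = ν² ∫ (∂_x^{k+1} n)² + ∫ (∂_x^{k-1} n_t)² + ν d/dt ∫ (∂_x^k n)²`
via the viscous continuity equation `n_t - ν n_{xx} + J_x = 0`. -/
theorem current_derivative_identity (ν T : ℝ) (hν : 0 < ν) (hT : 0 < T)
    (k : ℕ) (hk : k = 1 ∨ k = 2 ∨ k = 3)
    (n J : ℝ → ℝ → ℝ)
    (hn : ContDiff ℝ (⊤ : ℕ∞) fun p : ℝ × ℝ => n p.1 p.2)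
    (hJ : ContDiff ℝ (⊤ : ℕ∞) fun p : ℝ × ℝ => J p.1 p.2)
    (heq : ∀ t ∈ Icc (0:ℝ) T, ∀ x ∈ Icc (0:ℝ) 1,
      tderiv n t x - ν * iteratedDeriv 2 (n t) x + deriv (J t) x = 0)
    (hbc : ∀ t ∈ Icc (0:ℝ) T, ∀ j < k,
      iteratedDeriv j (n t) 0 = 0 ∧ iteratedDeriv j (n t) 1 = 0) :
    ∀ t ∈ Icc (0:ℝ) T,
      (∫ x in (0:ℝ)..1, (iteratedDeriv k (J t) x) ^ 2)
        = ν ^ 2 * (∫ x in (0:ℝ)..1, (iteratedDeriv (k + 1) (n t) x) ^ 2)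
          + (∫ x in (0:ℝ)..1, (iteratedDeriv (k - 1) (fun y => tderiv n t y) x) ^ 2)
          + ν * deriv (fun s => ∫ x in (0:ℝ)..1, (iteratedDeriv k (n s) x) ^ 2) t := by
  obtain ⟨m, rfl⟩ : ∃ m, k = m + 1 := by
    rcases hk with rfl | rfl | rfl
    exacts [⟨0, rfl⟩, ⟨1, rfl⟩, ⟨2, rfl⟩]
  intro t ht
  simp only [Nat.add_sub_cancel]
  rw [show m + 1 + 1 = m + 2 from rfl]
  -- basic smoothness facts
  have hnt : ∀ s : ℝ, ContDiff ℝ (⊤ : ℕ∞) (n s) := fun s =>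
    hn.comp ((contDiff_const (c := s)).prodMk contDiff_id)
  have hJt : ContDiff ℝ (⊤ : ℕ∞) (J t) :=
    hJ.comp ((contDiff_const (c := t)).prodMk contDiff_id)
  -- the function (s, y) ↦ ∂ₜ n(s, y) is jointly smooth
  have hNT : ContDiff ℝ (⊤ : ℕ∞) fun p : ℝ × ℝ => tderiv n p.1 p.2 := by
    have key := contDiff_fderiv_apply' (fun p : ℝ × ℝ => n p.1 p.2) hn ((1:ℝ),(0:ℝ))
    have e : (fun p : ℝ × ℝ => tderiv n p.1 p.2)
        = fun p : ℝ × ℝ => fderiv ℝ (fun q : ℝ × ℝ => n q.1 q.2) p ((1:ℝ),(0:ℝ)) := by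
      funext p
      have := slice_hasDerivAt_fst (fun q : ℝ × ℝ => n q.1 q.2)
        (hn.differentiable (by simp) p)
      simpa [tderiv] using this.deriv
    rw [e]; exact key
  have htd : ContDiff ℝ (⊤ : ℕ∞) (fun y => tderiv n t y) :=
    hNT.comp ((contDiff_const (c := t)).prodMk contDiff_id)
  -- pointwise identity on the interior
  have h_pde : ∀ x ∈ Ioo (0:ℝ) 1,
      iteratedDeriv (m+1) (J t) x
        = ν * iteratedDeriv (m+2) (n t) x - iteratedDeriv m (fun y => tderiv n t y) x := by
    intro x hx
    have hmem : Ioo (0:ℝ) 1 ∈ nhds x := isOpen_Ioo.mem_nhds hx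
    have heqn : (fun y => tderiv n t y)
        =ᶠ[nhds x] (fun y => ν * deriv (deriv (n t)) y - deriv (J t) y) := by
      filter_upwards [hmem] with y hy
      have h0 := heq t ht y (Ioo_subset_Icc_self hy)
      have h2 : iteratedDeriv 2 (n t) y = deriv (deriv (n t)) y := by
        rw [iteratedDeriv_succ, iteratedDeriv_one]
      rw [h2] at h0
      linarith
    have h1 := heqn.iteratedDeriv_eq m
    have hd2 : ContDiff ℝ (⊤ : ℕ∞) (deriv (deriv (n t))) := by
      have h3 := contDiff_top_iteratedDeriv (n t) (hnt t) 2
      rwa [iteratedDeriv_succ, iteratedDeriv_one] at h3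
    have hdJ : ContDiff ℝ (⊤ : ℕ∞) (deriv (J t)) := by
      have h3 := contDiff_top_iteratedDeriv (J t) hJt 1
      rwa [iteratedDeriv_one] at h3
    have h2 : iteratedDeriv m (fun y => ν * deriv (deriv (n t)) y - deriv (J t) y) x
        = ν * iteratedDeriv m (deriv (deriv (n t))) x - iteratedDeriv m (deriv (J t)) x := by
      simp only [← iteratedDerivWithin_univ]
      rw [show (fun y => ν * deriv (deriv (n t)) y - deriv (J t) y)
          = (fun y => ν * deriv (deriv (n t)) y) - deriv (J t) from rfl]
      rw [iteratedDerivWithin_sub (n := m) (f := fun y => ν * deriv (deriv (n t)) y)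
        (g := deriv (J t)) (mem_univ x) uniqueDiffOn_univ
        (((contDiff_const (c := ν)).mul hd2).of_le (by exact_mod_cast (le_top : (m:ℕ∞) ≤ ⊤))).contDiffWithinAt
        ((hdJ.of_le (by exact_mod_cast (le_top : (m:ℕ∞) ≤ ⊤))).contDiffWithinAt)]
      rw [iteratedDerivWithin_const_mul (n := m) (mem_univ x) uniqueDiffOn_univ ν
        ((hd2.of_le (by exact_mod_cast (le_top : (m:ℕ∞) ≤ ⊤))).contDiffWithinAt)]
    have h3 : iteratedDeriv m (deriv (deriv (n t))) x = iteratedDeriv (m+2) (n t) x := by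
      rw [show m + 2 = m + 1 + 1 from rfl, iteratedDeriv_succ', iteratedDeriv_succ']
    have h4 : iteratedDeriv m (deriv (J t)) x = iteratedDeriv (m+1) (J t) x := by
      rw [iteratedDeriv_succ']
    rw [h1, h2, h3, h4] at *
    linarith [h1]
  have h_eqIcc : Set.EqOn (iteratedDeriv (m+1) (J t))
      (fun x => ν * iteratedDeriv (m+2) (n t) x - iteratedDeriv m (fun y => tderiv n t y) x)
      (Icc (0:ℝ) 1) := by
    have hA : Continuous (iteratedDeriv (m+1) (J t)) :=
      (contDiff_top_iteratedDeriv _ hJt _).continuous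
    have hB : Continuous (iteratedDeriv (m+2) (n t)) :=
      (contDiff_top_iteratedDeriv _ (hnt t) _).continuous
    have hC : Continuous (iteratedDeriv m (fun y => tderiv n t y)) :=
      (contDiff_top_iteratedDeriv _ htd _).continuous
    have hRHS : Continuous
        (fun x => ν * iteratedDeriv (m+2) (n t) x - iteratedDeriv m (fun y => tderiv n t y) x) :=
      (continuous_const.mul hB).sub hC
    have := (Set.EqOn.closure (fun x hx => h_pde x hx) hA hRHS)
    rwa [closure_Ioo (by norm_num : (0:ℝ) ≠ 1)] at this
  -- boundary vanishing of C
  have h_bdry : iteratedDeriv m (fun y => tderiv n t y) 0 = 0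
      ∧ iteratedDeriv m (fun y => tderiv n t y) 1 = 0 := by
    have key : ∀ x₀ : ℝ, (∀ s ∈ Icc (0:ℝ) T, iteratedDeriv m (n s) x₀ = 0) →
        iteratedDeriv m (fun y => tderiv n t y) x₀ = 0 := by
      intro x₀ h0
      have hcomm := iteratedDeriv_tderiv_comm n hn m t x₀
      have hφ : ContDiff ℝ (⊤ : ℕ∞) (fun s => iteratedDeriv m (n s) x₀) :=
        (joint_smooth_iteratedDeriv n hn m).comp (contDiff_id.prodMk contDiff_const)
      have hd : DifferentiableAt ℝ (fun s => iteratedDeriv m (n s) x₀) t :=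
        (hφ.differentiable (by simp)).differentiableAt
      have hud : UniqueDiffWithinAt ℝ (Icc (0:ℝ) T) t := (uniqueDiffOn_Icc hT) t ht
      have e1 : deriv (fun s => iteratedDeriv m (n s) x₀) t
          = derivWithin (fun s => iteratedDeriv m (n s) x₀) (Icc (0:ℝ) T) t :=
        (hd.derivWithin hud).symm
      have e2 : derivWithin (fun s => iteratedDeriv m (n s) x₀) (Icc (0:ℝ) T) t
          = derivWithin (fun _ : ℝ => (0:ℝ)) (Icc (0:ℝ) T) t :=
        derivWithin_congr (fun s hs => h0 s hs) (h0 t ht)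
      simp only [tderiv]
      rw [← hcomm, e1, e2, derivWithin_fun_const]
      rfl
    exact ⟨key 0 (fun s hs => (hbc s hs m (lt_add_one m)).1),
           key 1 (fun s hs => (hbc s hs m (lt_add_one m)).2)⟩
  -- derivative of the energy integral
  have h_deriv : deriv (fun s => ∫ x in (0:ℝ)..1, (iteratedDeriv (m+1) (n s) x) ^ 2) t
      = ∫ x in (0:ℝ)..1,
          2 * iteratedDeriv (m+1) (n t) x * iteratedDeriv (m+1) (fun y => tderiv n t y) x := by
    have hQ : ContDiff ℝ (⊤ : ℕ∞) (fun p : ℝ × ℝ => iteratedDeriv (m+1) (n p.1) p.2) :=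
      joint_smooth_iteratedDeriv n hn (m+1)
    have hD : ContDiff ℝ (⊤ : ℕ∞)
        (fun p : ℝ × ℝ => fderiv ℝ (fun q : ℝ × ℝ => iteratedDeriv (m+1) (n q.1) q.2) p
          ((1:ℝ),(0:ℝ))) := contDiff_fderiv_apply' _ hQ _
    have hslice : ∀ s x : ℝ, HasDerivAt (fun s' => iteratedDeriv (m+1) (n s') x)
        (fderiv ℝ (fun q : ℝ × ℝ => iteratedDeriv (m+1) (n q.1) q.2) (s, x) ((1:ℝ),(0:ℝ))) s :=
      fun s x => slice_hasDerivAt_fst _ (hQ.differentiable (by simp) (s, x))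
    have hF' : ∀ s x : ℝ, HasDerivAt (fun s' => (iteratedDeriv (m+1) (n s') x) ^ 2)
        (2 * iteratedDeriv (m+1) (n s) x
          * fderiv ℝ (fun q : ℝ × ℝ => iteratedDeriv (m+1) (n q.1) q.2) (s, x) ((1:ℝ),(0:ℝ))) s := by
      intro s x
      have h2 := (hslice s x).fun_pow 2
      simpa using h2
    have hcont : Continuous (fun p : ℝ × ℝ => 2 * iteratedDeriv (m+1) (n p.1) p.2
        * fderiv ℝ (fun q : ℝ × ℝ => iteratedDeriv (m+1) (n q.1) q.2) p ((1:ℝ),(0:ℝ))) :=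
      (continuous_const.mul hQ.continuous).mul hD.continuous
    obtain ⟨M, hM⟩ := (IsCompact.prod (isCompact_Icc (a := t-1) (b := t+1))
      (isCompact_Icc (a := (0:ℝ)) (b := 1))).exists_bound_of_continuousOn hcont.continuousOn
    have key := intervalIntegral.hasDerivAt_integral_of_dominated_loc_of_deriv_le
      (F := fun s x => (iteratedDeriv (m+1) (n s) x) ^ 2)
      (F' := fun s x => 2 * iteratedDeriv (m+1) (n s) x
        * fderiv ℝ (fun q : ℝ × ℝ => iteratedDeriv (m+1) (n q.1) q.2) (s, x) ((1:ℝ),(0:ℝ)))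
      (x₀ := t) (a := 0) (b := 1) (bound := fun _ => M) (s := Metric.ball t 1) (μ := MeasureTheory.volume) (Metric.ball_mem_nhds t one_pos)
      (Filter.Eventually.of_forall (fun s =>
        (((hQ.continuous.comp (Continuous.prodMk_right s)).pow 2).aestronglyMeasurable)))
      (((hQ.continuous.comp (Continuous.prodMk_right t)).pow 2).intervalIntegrable 0 1)
      ((hcont.comp (Continuous.prodMk_right t)).aestronglyMeasurable)
      (Filter.Eventually.of_forall (fun x hx s hs => by
        have hx' : x ∈ Icc (0:ℝ) 1 := by
          rw [uIoc_of_le (by norm_num : (0:ℝ) ≤ 1)] at hx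
          exact ⟨le_of_lt hx.1, hx.2⟩
        have hs' : s ∈ Icc (t-1) (t+1) := by
          rw [Metric.mem_ball, Real.dist_eq, abs_sub_lt_iff] at hs
          constructor <;> linarith
        have := hM (s, x) (Set.mk_mem_prod hs' hx')
        simpa using this))
      (intervalIntegrable_const)
      (Filter.Eventually.of_forall (fun x hx s hs => hF' s x))
    have hkey : HasDerivAt (fun s => ∫ x in (0:ℝ)..1, (iteratedDeriv (m+1) (n s) x) ^ 2)
        (∫ x in (0:ℝ)..1, 2 * iteratedDeriv (m+1) (n t) x
          * fderiv ℝ (fun q : ℝ × ℝ => iteratedDeriv (m+1) (n q.1) q.2) (t, x) ((1:ℝ),(0:ℝ))) t :=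
      key.2
    rw [hkey.deriv]
    apply intervalIntegral.integral_congr
    intro x _
    have e1 : fderiv ℝ (fun q : ℝ × ℝ => iteratedDeriv (m+1) (n q.1) q.2) (t, x) ((1:ℝ),(0:ℝ))
        = deriv (fun s => iteratedDeriv (m+1) (n s) x) t := ((hslice t x).deriv).symm
    have e2 := iteratedDeriv_tderiv_comm n hn (m+1) t x
    show 2 * iteratedDeriv (m+1) (n t) x * _ = _
    rw [e1, e2]
    rfl
  -- integration by parts
  have h_ibp : ∫ x in (0:ℝ)..1,
        iteratedDeriv (m+1) (n t) x * iteratedDeriv (m+1) (fun y => tderiv n t y) x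
      = - ∫ x in (0:ℝ)..1,
          iteratedDeriv (m+2) (n t) x * iteratedDeriv m (fun y => tderiv n t y) x := by
    have hu : ∀ x ∈ uIcc (0:ℝ) 1, HasDerivAt (iteratedDeriv (m+1) (n t))
        (iteratedDeriv (m+2) (n t) x) x := by
      intro x _
      have hd : DifferentiableAt ℝ (iteratedDeriv (m+1) (n t)) x :=
        ((contDiff_top_iteratedDeriv (n t) (hnt t) (m+1)).differentiable (by simp)).differentiableAt
      have := hd.hasDerivAt
      rwa [show iteratedDeriv (m+2) (n t) x = deriv (iteratedDeriv (m+1) (n t)) x from by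
        rw [iteratedDeriv_succ]]
    have hv : ∀ x ∈ uIcc (0:ℝ) 1, HasDerivAt (iteratedDeriv m (fun y => tderiv n t y))
        (iteratedDeriv (m+1) (fun y => tderiv n t y) x) x := by
      intro x _
      have hd : DifferentiableAt ℝ (iteratedDeriv m (fun y => tderiv n t y)) x :=
        ((contDiff_top_iteratedDeriv _ htd m).differentiable (by simp)).differentiableAt
      have := hd.hasDerivAt
      rwa [show iteratedDeriv (m+1) (fun y => tderiv n t y) x
          = deriv (iteratedDeriv m (fun y => tderiv n t y)) x from by rw [iteratedDeriv_succ]]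
    have hiu : IntervalIntegrable (iteratedDeriv (m+2) (n t)) MeasureTheory.volume 0 1 :=
      ((contDiff_top_iteratedDeriv (n t) (hnt t) (m+2)).continuous).intervalIntegrable 0 1
    have hiv : IntervalIntegrable (iteratedDeriv (m+1) (fun y => tderiv n t y))
        MeasureTheory.volume 0 1 :=
      ((contDiff_top_iteratedDeriv _ htd (m+1)).continuous).intervalIntegrable 0 1
    have key2 : (∫ x in (0:ℝ)..1,
          iteratedDeriv (m+1) (n t) x * iteratedDeriv (m+1) (fun y => tderiv n t y) x)
        = iteratedDeriv (m+1) (n t) 1 * iteratedDeriv m (fun y => tderiv n t y) 1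
          - iteratedDeriv (m+1) (n t) 0 * iteratedDeriv m (fun y => tderiv n t y) 0
          - ∫ x in (0:ℝ)..1,
              iteratedDeriv (m+2) (n t) x * iteratedDeriv m (fun y => tderiv n t y) x :=
      intervalIntegral.integral_mul_deriv_eq_deriv_mul hu hv hiu hiv
    rw [h_bdry.1, h_bdry.2] at key2
    rw [key2]
    ring
  -- expansion of the square
  have h_sq : (∫ x in (0:ℝ)..1, (iteratedDeriv (m+1) (J t) x) ^ 2)
      = ν ^ 2 * (∫ x in (0:ℝ)..1, (iteratedDeriv (m+2) (n t) x) ^ 2)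
        + (∫ x in (0:ℝ)..1, (iteratedDeriv m (fun y => tderiv n t y) x) ^ 2)
        - 2 * ν * ∫ x in (0:ℝ)..1,
            iteratedDeriv (m+2) (n t) x * iteratedDeriv m (fun y => tderiv n t y) x := by
    have hB : Continuous (iteratedDeriv (m+2) (n t)) :=
      (contDiff_top_iteratedDeriv _ (hnt t) _).continuous
    have hC : Continuous (iteratedDeriv m (fun y => tderiv n t y)) :=
      (contDiff_top_iteratedDeriv _ htd _).continuous
    have e0 : (∫ x in (0:ℝ)..1, (iteratedDeriv (m+1) (J t) x) ^ 2)
        = ∫ x in (0:ℝ)..1, (ν * iteratedDeriv (m+2) (n t) x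
            - iteratedDeriv m (fun y => tderiv n t y) x) ^ 2 := by
      apply intervalIntegral.integral_congr
      intro x hx
      rw [uIcc_of_le (by norm_num : (0:ℝ) ≤ 1)] at hx
      show (iteratedDeriv (m+1) (J t) x) ^ 2 = _
      rw [h_eqIcc hx]
    rw [e0]
    have e1 : (fun x => (ν * iteratedDeriv (m+2) (n t) x
          - iteratedDeriv m (fun y => tderiv n t y) x) ^ 2)
        = fun x => (ν ^ 2 * (iteratedDeriv (m+2) (n t) x) ^ 2
            + (iteratedDeriv m (fun y => tderiv n t y) x) ^ 2)
          - 2 * ν * (iteratedDeriv (m+2) (n t) x * iteratedDeriv m (fun y => tderiv n t y) x) := by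
      funext x; ring
    rw [e1]
    have i1 : IntervalIntegrable (fun x => ν ^ 2 * (iteratedDeriv (m+2) (n t) x) ^ 2)
        MeasureTheory.volume 0 1 :=
      (continuous_const.mul (hB.pow 2)).intervalIntegrable 0 1
    have i2 : IntervalIntegrable (fun x => (iteratedDeriv m (fun y => tderiv n t y) x) ^ 2)
        MeasureTheory.volume 0 1 := (hC.pow 2).intervalIntegrable 0 1
    have i3 : IntervalIntegrable (fun x => 2 * ν * (iteratedDeriv (m+2) (n t) x
        * iteratedDeriv m (fun y => tderiv n t y) x)) MeasureTheory.volume 0 1 :=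
      (continuous_const.mul (hB.mul hC)).intervalIntegrable 0 1
    rw [intervalIntegral.integral_sub (i1.add i2) i3, intervalIntegral.integral_add i1 i2,
      intervalIntegral.integral_const_mul, intervalIntegral.integral_const_mul]
  have h_deriv2 : deriv (fun s => ∫ x in (0:ℝ)..1, (iteratedDeriv (m+1) (n s) x) ^ 2) t
      = 2 * ∫ x in (0:ℝ)..1,
          iteratedDeriv (m+1) (n t) x * iteratedDeriv (m+1) (fun y => tderiv n t y) x := by
    rw [h_deriv, ← intervalIntegral.integral_const_mul]
    apply intervalIntegral.integral_congr
    intro x _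
    show 2 * iteratedDeriv (m+1) (n t) x * iteratedDeriv (m+1) (fun y => tderiv n t y) x = _
    ring
  rw [h_sq, h_deriv2, h_ibp]
  ring
end
end

section
/- Let ν, τ, λ > 0, μ > 0, and let ρ ∈ C([0,1]) with ρ > 0 satisfy τ(2+τν)(2μ+5)(μνλ² + νρ(x))/(3λ²) > 1 for all x ∈ [0,1]. Then there exist positive constants l₁, l₂ (depending only on ν, τ, λ, μ and ρ) such that for all functions ñ, Ẽ ∈ H¹(0,1) with ñ(0) = 0 and Ẽ(0) = 0: l₁‖ñ‖²_{H¹} + l₂‖Ẽ‖²_{H¹} ≤ (8/(3τ(2μ+5)))‖Ẽ‖²_{L²} + (4ν/(3(2μ+5)))‖Ẽ_x‖²_{L²} + μν‖ñ_x‖²_{L²} + (ν/λ²)∫₀¹ ρ(x) ñ(x)² dx − (4/(τ(2μ+5)))∫₀¹ ñ(x)Ẽ(x) dx. -/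
open MeasureTheory Set

noncomputable section

/-- The squared `L²(0,1)` norm of a function. -/
def L2sq (f : ℝ → ℝ) : ℝ := ∫ x in (0:ℝ)..1, (f x) ^ 2

/-- The squared Sobolev `H^k(0,1)` norm of a function (classical derivatives). -/
def sobSq (k : ℕ) (f : ℝ → ℝ) : ℝ :=
  ∑ i ∈ Finset.range (k + 1), L2sq (iteratedDeriv i f)

lemma L2sq_nonneg (f : ℝ → ℝ) : 0 ≤ L2sq f :=
  intervalIntegral.integral_nonneg (by norm_num) (fun x _ => sq_nonneg _)

/-- Cauchy–Schwarz step: `(∫₀ˣ g)² ≤ ∫₀¹ g²` for `x ∈ [0,1]`. -/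
lemma sq_integral_le (g : ℝ → ℝ) (hg : Continuous g) {x : ℝ} (hx0 : 0 ≤ x) (hx1 : x ≤ 1) :
    (∫ y in (0:ℝ)..x, g y) ^ 2 ≤ ∫ y in (0:ℝ)..1, (g y) ^ 2 := by
  have hgsq : Continuous fun y => (g y) ^ 2 := hg.pow 2
  have hJ1 : (0:ℝ) ≤ ∫ y in (0:ℝ)..1, (g y) ^ 2 :=
    intervalIntegral.integral_nonneg (by norm_num) (fun y _ => sq_nonneg _)
  rcases eq_or_lt_of_le hx0 with h | hxpos
  · rw [← h]; simpa using hJ1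
  set I := ∫ y in (0:ℝ)..x, g y with hI
  set J := ∫ y in (0:ℝ)..x, (g y) ^ 2 with hJ
  have hJnn : 0 ≤ J := intervalIntegral.integral_nonneg hx0 (fun y _ => sq_nonneg _)
  have key : 0 ≤ ∫ y in (0:ℝ)..x, (g y - I / x) ^ 2 :=
    intervalIntegral.integral_nonneg hx0 (fun y _ => sq_nonneg _)
  have expand : (∫ y in (0:ℝ)..x, (g y - I / x) ^ 2)
      = J - 2 * (I / x) * I + (I / x) ^ 2 * x := by
    have e : ∀ y, (g y - I / x) ^ 2 = (g y) ^ 2 - (2 * (I / x)) * g y + (I / x) ^ 2 := by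
      intro y; ring
    simp_rw [e]
    rw [intervalIntegral.integral_add
        (((hgsq.intervalIntegrable 0 x)).sub ((hg.intervalIntegrable 0 x).const_mul _))
        intervalIntegrable_const,
      intervalIntegral.integral_sub (hgsq.intervalIntegrable 0 x)
        ((hg.intervalIntegrable 0 x).const_mul _),
      intervalIntegral.integral_const_mul, intervalIntegral.integral_const]
    simp [smul_eq_mul]
    ring
  have hxne : x ≠ 0 := ne_of_gt hxpos
  have e2 : J - 2 * (I / x) * I + (I / x) ^ 2 * x = J - I ^ 2 / x := by
    field_simp; ring
  rw [expand, e2] at key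
  have h1 : I ^ 2 ≤ x * J := by
    have := (div_le_iff₀ hxpos).mp (by linarith : I ^ 2 / x ≤ J)
    linarith
  have h2 : J ≤ ∫ y in (0:ℝ)..1, (g y) ^ 2 :=
    intervalIntegral.integral_mono_interval le_rfl hx0 hx1
      (Filter.Eventually.of_forall fun y => sq_nonneg _) (hgsq.intervalIntegrable 0 1)
  nlinarith

/-- Poincaré inequality on `[0,1]` for functions vanishing at `0`. -/
lemma poincare (f : ℝ → ℝ) (hf : ContDiff ℝ 1 f) (hf0 : f 0 = 0) :
    L2sq f ≤ L2sq (deriv f) := by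
  have hdc : Continuous (deriv f) := hf.continuous_deriv le_rfl
  have hrep : ∀ x : ℝ, f x = ∫ y in (0:ℝ)..x, deriv f y := by
    intro x
    rw [intervalIntegral.integral_deriv_eq_sub
        (fun y _ => (hf.differentiable one_ne_zero).differentiableAt)
        (hdc.intervalIntegrable 0 x), hf0, sub_zero]
  have hpt : ∀ x ∈ Icc (0:ℝ) 1, (f x) ^ 2 ≤ L2sq (deriv f) := by
    intro x hx
    rw [hrep x]
    exact sq_integral_le (deriv f) hdc hx.1 hx.2
  have hfc : Continuous f := hf.continuous
  calc L2sq f = ∫ x in (0:ℝ)..1, (f x) ^ 2 := rfl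
    _ ≤ ∫ _x in (0:ℝ)..1, L2sq (deriv f) :=
        intervalIntegral.integral_mono_on (by norm_num)
          ((hfc.pow 2).intervalIntegrable 0 1) intervalIntegrable_const hpt
    _ = L2sq (deriv f) := by simp

/-- Expansion of `0 ≤ ∫ (t f - g)²`. -/
lemma expand_sq (f g : ℝ → ℝ) (hf : Continuous f) (hg : Continuous g) (t : ℝ) :
    0 ≤ t ^ 2 * (∫ x in (0:ℝ)..1, (f x) ^ 2)
      - 2 * t * (∫ x in (0:ℝ)..1, f x * g x) + ∫ x in (0:ℝ)..1, (g x) ^ 2 := by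
  have h0 : (0:ℝ) ≤ ∫ x in (0:ℝ)..1, (t * f x - g x) ^ 2 :=
    intervalIntegral.integral_nonneg (by norm_num) (fun x _ => sq_nonneg _)
  have e : ∀ x, (t * f x - g x) ^ 2
      = t ^ 2 * (f x) ^ 2 - (2 * t) * (f x * g x) + (g x) ^ 2 := by intro x; ring
  have hf2 : IntervalIntegrable (fun x => (f x) ^ 2) volume 0 1 :=
    (hf.pow 2).intervalIntegrable 0 1
  have hg2 : IntervalIntegrable (fun x => (g x) ^ 2) volume 0 1 :=
    (hg.pow 2).intervalIntegrable 0 1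
  have hfg : IntervalIntegrable (fun x => f x * g x) volume 0 1 :=
    (hf.mul hg).intervalIntegrable 0 1
  rw [show (fun x => (t * f x - g x) ^ 2)
      = fun x => t ^ 2 * (f x) ^ 2 - (2 * t) * (f x * g x) + (g x) ^ 2 from funext e,
    intervalIntegral.integral_add ((hf2.const_mul _).sub (hfg.const_mul _)) hg2,
    intervalIntegral.integral_sub (hf2.const_mul _) (hfg.const_mul _),
    intervalIntegral.integral_const_mul, intervalIntegral.integral_const_mul] at h0
  linarith

lemma sobSq_one (f : ℝ → ℝ) : sobSq 1 f = L2sq f + L2sq (deriv f) := by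
  simp [sobSq, Finset.sum_range_succ, iteratedDeriv_zero, iteratedDeriv_one]

set_option maxHeartbeats 1000000 in
/-- estimate (3.15): coercivity of the quadratic form appearing in the
energy method, under the condition `τ(2+τν)(2μ+5)(μνλ² + νρ(x))/(3λ²) > 1` on `[0,1]`. -/
theorem coercivity_estimate (ν τ lam μ : ℝ) (hν : 0 < ν) (hτ : 0 < τ)
    (hlam : 0 < lam) (hμ : 0 < μ)
    (ρ : ℝ → ℝ) (hρc : ContinuousOn ρ (Icc 0 1)) (hρpos : ∀ x ∈ Icc (0:ℝ) 1, 0 < ρ x)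
    (hcond : ∀ x ∈ Icc (0:ℝ) 1,
      1 < τ * (2 + τ * ν) * (2 * μ + 5) * (μ * ν * lam ^ 2 + ν * ρ x) / (3 * lam ^ 2)) :
    ∃ l₁ > (0:ℝ), ∃ l₂ > (0:ℝ), ∀ tn tE : ℝ → ℝ,
      ContDiff ℝ 1 tn → ContDiff ℝ 1 tE → tn 0 = 0 → tE 0 = 0 →
      l₁ * sobSq 1 tn + l₂ * sobSq 1 tE
        ≤ (8 / (3 * τ * (2 * μ + 5))) * L2sq tE
          + (4 * ν / (3 * (2 * μ + 5))) * L2sq (deriv tE)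
          + μ * ν * L2sq (deriv tn)
          + (ν / lam ^ 2) * (∫ x in (0:ℝ)..1, ρ x * (tn x) ^ 2)
          - (4 / (τ * (2 * μ + 5))) * ∫ x in (0:ℝ)..1, tn x * tE x := by
  -- minimum of ρ on [0,1]
  obtain ⟨x₀, hx₀, hmin⟩ := (isCompact_Icc : IsCompact (Icc (0:ℝ) 1)).exists_isMinOn
    ⟨0, by norm_num⟩ hρc
  set m := ρ x₀ with hm
  have hmpos : 0 < m := hρpos x₀ hx₀
  have hmle : ∀ x ∈ Icc (0:ℝ) 1, m ≤ ρ x := fun x hx => hmin hx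
  clear_value m
  have hQ : (0:ℝ) < 2 * μ + 5 := by linarith
  set a := 8 / (3 * τ * (2 * μ + 5)) with ha
  set b := 4 * ν / (3 * (2 * μ + 5)) with hb
  set c := 4 / (τ * (2 * μ + 5)) with hc
  set α := μ * ν + ν / lam ^ 2 * m with hα
  set β := a + b with hβ
  clear_value a b c α β
  have hapos : 0 < a := by rw [ha]; positivity
  have hbpos : 0 < b := by rw [hb]; positivity
  have hcpos : 0 < c := by rw [hc]; positivity
  have hαpos : 0 < α := by rw [hα]; positivity
  have hβpos : 0 < β := by rw [hβ]; linarith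
  -- discriminant condition
  have key : 3 * lam ^ 2 < τ * (2 + τ * ν) * (2 * μ + 5) * (μ * ν * lam ^ 2 + ν * m) := by
    have h := hcond x₀ hx₀
    rw [lt_div_iff₀ (by positivity)] at h
    rw [← hm] at h
    linarith
  have hτne : τ ≠ 0 := ne_of_gt hτ
  have hQne : (2 * μ + 5) ≠ 0 := ne_of_gt hQ
  have hlamne : lam ≠ 0 := ne_of_gt hlam
  have hid : 4 * α * β - c ^ 2
      = (16 / (3 * (τ * (2 * μ + 5)) ^ 2 * lam ^ 2))
        * (τ * (2 + τ * ν) * (2 * μ + 5) * (μ * ν * lam ^ 2 + ν * m) - 3 * lam ^ 2) := by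
    rw [hα, hβ, ha, hb, hc]
    field_simp
    ring
  have hdisc : c ^ 2 < 4 * α * β := by
    have hfac : (0:ℝ) < 16 / (3 * (τ * (2 * μ + 5)) ^ 2 * lam ^ 2) := by positivity
    have h2 : (0:ℝ) < τ * (2 + τ * ν) * (2 * μ + 5) * (μ * ν * lam ^ 2 + ν * m)
        - 3 * lam ^ 2 := by linarith
    have := mul_pos hfac h2
    linarith [hid, this]
  set ε := 4 * α * β - c ^ 2 with hε
  have hεpos : 0 < ε := by rw [hε]; linarith
  clear_value ε
  set δ := min (min (μ * ν) b) (min (β / 4) (ε / (8 * (α + β)))) with hδ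
  have hδpos : 0 < δ := by
    rw [hδ]
    apply lt_min (lt_min (by positivity) hbpos)
    exact lt_min (by positivity) (div_pos hεpos (by positivity))
  have e1 : δ ≤ μ * ν := by
    rw [hδ]; exact le_trans (min_le_left _ _) (min_le_left _ _)
  have e2 : δ ≤ b := by
    rw [hδ]; exact le_trans (min_le_left _ _) (min_le_right _ _)
  have e4 : δ ≤ β / 4 := by
    rw [hδ]; exact le_trans (min_le_right _ _) (min_le_left _ _)
  have e3 : 8 * δ * (α + β) ≤ ε := by
    have h : δ ≤ ε / (8 * (α + β)) := by
      rw [hδ]; exact le_trans (min_le_right _ _) (min_le_right _ _)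
    have := (le_div_iff₀ (by positivity : (0:ℝ) < 8 * (α + β))).mp h
    linarith
  clear_value δ
  rw [hε] at e3
  have hβδ : 0 < β - 2 * δ := by linarith
  have hq : c ^ 2 ≤ 4 * (α - 2 * δ) * (β - 2 * δ) := by nlinarith [sq_nonneg δ, e3]
  have hα2δ : 0 < α - 2 * δ := by
    have hc2 : 0 < c ^ 2 := pow_pos hcpos 2
    have h4 : 0 < 4 * (α - 2 * δ) * (β - 2 * δ) := lt_of_lt_of_le hc2 hq
    by_contra h
    push_neg at h
    nlinarith [mul_nonneg (by linarith : (0:ℝ) ≤ 2 * δ - α) (le_of_lt hβδ)]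
  set t := c / (2 * (β - 2 * δ)) with ht
  have htpos : 0 < t := by rw [ht]; exact div_pos hcpos (by linarith)
  have hct2 : c * t / 2 ≤ α - 2 * δ := by
    rw [ht]
    rw [show c * (c / (2 * (β - 2 * δ))) / 2 = c ^ 2 / (4 * (β - 2 * δ)) by
      field_simp; ring]
    rw [div_le_iff₀ (by linarith : (0:ℝ) < 4 * (β - 2 * δ))]
    nlinarith [hq]
  have hc2t : c / (2 * t) = β - 2 * δ := by
    have hbd : β - 2 * δ ≠ 0 := ne_of_gt hβδ
    have hcne : c ≠ 0 := ne_of_gt hcpos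
    rw [ht]
    field_simp
  clear_value t
  refine ⟨δ, hδpos, δ, hδpos, fun tn tE htn htE h0n h0E => ?_⟩
  have htnc : Continuous tn := htn.continuous
  have htEc : Continuous tE := htE.continuous
  set A := L2sq tn with hA
  set A' := L2sq (deriv tn) with hA'
  set B := L2sq tE with hB
  set B' := L2sq (deriv tE) with hB'
  set C := ∫ x in (0:ℝ)..1, ρ x * (tn x) ^ 2 with hC
  set D := ∫ x in (0:ℝ)..1, tn x * tE x with hD
  clear_value A A' B B' C D
  have hAnn : 0 ≤ A := hA ▸ L2sq_nonneg tn
  have hBnn : 0 ≤ B := hB ▸ L2sq_nonneg tE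
  have hAA' : A ≤ A' := by rw [hA, hA']; exact poincare tn htn h0n
  have hBB' : B ≤ B' := by rw [hB, hB']; exact poincare tE htE h0E
  -- lower bound on the potential term
  have hCge : m * A ≤ C := by
    have hint1 : IntervalIntegrable (fun x => m * (tn x) ^ 2) volume 0 1 :=
      (continuous_const.mul (htnc.pow 2)).intervalIntegrable 0 1
    have hint2 : IntervalIntegrable (fun x => ρ x * (tn x) ^ 2) volume 0 1 := by
      apply ContinuousOn.intervalIntegrable
      rw [uIcc_of_le (by norm_num : (0:ℝ) ≤ 1)]
      exact hρc.mul ((htnc.pow 2).continuousOn)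
    have hmono : (∫ x in (0:ℝ)..1, m * (tn x) ^ 2) ≤ C := by
      rw [hC]
      exact intervalIntegral.integral_mono_on (by norm_num) hint1 hint2
        (fun x hx => mul_le_mul_of_nonneg_right (hmle x hx) (sq_nonneg _))
    rw [hA]
    calc m * L2sq tn = ∫ x in (0:ℝ)..1, m * (tn x) ^ 2 := by
          rw [L2sq, intervalIntegral.integral_const_mul]
      _ ≤ C := hmono
  -- the cross term
  have hquad : 0 ≤ t ^ 2 * A - 2 * t * D + B := by
    rw [hA, hB, hD]; exact expand_sq tn tE htnc htEc t
  have hcD : c * D ≤ (α - 2 * δ) * A + (β - 2 * δ) * B := by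
    have step1 : c * D ≤ (c * t / 2) * A + (c / (2 * t)) * B := by
      have h2t : 0 < c / (2 * t) := by positivity
      have := mul_le_mul_of_nonneg_left
        (by linarith : 2 * t * D ≤ t ^ 2 * A + B) (le_of_lt h2t)
      calc c * D = (c / (2 * t)) * (2 * t * D) := by field_simp
        _ ≤ (c / (2 * t)) * (t ^ 2 * A + B) := this
        _ = (c * t / 2) * A + (c / (2 * t)) * B := by field_simp
    calc c * D ≤ (c * t / 2) * A + (c / (2 * t)) * B := step1
      _ ≤ (α - 2 * δ) * A + (β - 2 * δ) * B := by
          rw [hc2t]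
          have := mul_le_mul_of_nonneg_right hct2 hAnn
          linarith
  rw [sobSq_one, sobSq_one, ← hA, ← hA', ← hB, ← hB']
  -- final linear combination
  have hCge' : ν / lam ^ 2 * (m * A) ≤ ν / lam ^ 2 * C :=
    mul_le_mul_of_nonneg_left hCge (by positivity)
  have p1 : 0 ≤ (b - δ) * (B' - B) := mul_nonneg (by linarith) (by linarith)
  have p2 : 0 ≤ (μ * ν - δ) * (A' - A) := mul_nonneg (by linarith) (by linarith)
  rw [hα, hβ] at hcD
  linarith [hcD, hCge', p1, p2]
end
end
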